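/- Let O be the ring of integers of a finite extension of ℚ_p, Λ = O[[X]], and for a_p ∈ O with ord_p(a_p) > 0 define J = { (g_1, g_2) ∈ Λ ⊕ Λ : (p−1)·g_1(0) = (2−a_p)·g_2(0) }. Then J ∩ p(Λ ⊕ Λ) = pJ. -/

import Mathlib

/-- Let `O` be the ring of integers of a finite extension of `ℚ_p`
(formalized: a complete-type DVR, finite over `ℤ_p`), `Λ = O[[X]]`, `a_p ∈ O`
with `ord_p(a_p) > 0` (i.e. `a_p` a non-unit), and
`J = {(g₁,g₂) ∈ Λ⊕Λ : (p−1)g₁(0) = (2−a_p)g₂(0)}`.  Then `J ∩ p(Λ⊕Λ) = pJ`. -/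
theorem stmt10 (p : ℕ) [Fact p.Prime] (hp : Odd p)
    (O : Type*) [CommRing O] [IsDomain O] [IsDiscreteValuationRing O]
    [Algebra ℤ_[p] O] [Module.Finite ℤ_[p] O]
    (ap : O) (hap : ¬ IsUnit ap) :
    ∀ x : PowerSeries O × PowerSeries O,
      (((p : O) - 1) * PowerSeries.constantCoeff x.1
          = (2 - ap) * PowerSeries.constantCoeff x.2
        ∧ ∃ y : PowerSeries O × PowerSeries O, x = p • y)
      ↔ ∃ z : PowerSeries O × PowerSeries O,
          (((p : O) - 1) * PowerSeries.constantCoeff z.1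
            = (2 - ap) * PowerSeries.constantCoeff z.2) ∧ x = p • z := by
  intro x
  constructor
  · rintro ⟨hc, y, rfl⟩
    by_cases hp0 : (p : O) = 0
    · refine ⟨0, by simp, ?_⟩
      have h1 : (p : ℕ) • y = ((p : O)) • y := (Nat.cast_smul_eq_nsmul O p y).symm
      have h2 : (p : ℕ) • (0 : PowerSeries O × PowerSeries O)
          = ((p : O)) • (0 : PowerSeries O × PowerSeries O) :=
        (Nat.cast_smul_eq_nsmul O p 0).symm
      rw [h1, h2, hp0, zero_smul, zero_smul]
    · refine ⟨y, ?_, rfl⟩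
      have hfst : (PowerSeries.constantCoeff) ((p • y).1)
          = (p : O) * (PowerSeries.constantCoeff) y.1 := by
        rw [Prod.smul_fst, map_nsmul, nsmul_eq_mul]
      have hsnd : (PowerSeries.constantCoeff) ((p • y).2)
          = (p : O) * (PowerSeries.constantCoeff) y.2 := by
        rw [Prod.smul_snd, map_nsmul, nsmul_eq_mul]
      rw [hfst, hsnd] at hc
      apply mul_left_cancel₀ hp0
      ring_nf
      ring_nf at hc
      linear_combination hc
  · rintro ⟨z, hz, rfl⟩
    refine ⟨?_, z, rfl⟩
    have hfst : (PowerSeries.constantCoeff) ((p • z).1)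
        = (p : O) * (PowerSeries.constantCoeff) z.1 := by
      rw [Prod.smul_fst, map_nsmul, nsmul_eq_mul]
    have hsnd : (PowerSeries.constantCoeff) ((p • z).2)
        = (p : O) * (PowerSeries.constantCoeff) z.2 := by
      rw [Prod.smul_snd, map_nsmul, nsmul_eq_mul]
    rw [hfst, hsnd]
    ring_nf
    linear_combination ((p : O)) * hz
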